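/- If S ⊆ ℝ≥0^n is compact and 0 ∉ S, then the max cone span(S) is closed in ℝ≥0^n. -/

import Mathlib

open scoped NNReal

/-- The max-algebraic span of `S`: all vectors `⨆_{x ∈ S} λ_x • x` where only
finitely many coefficients `λ_x` are nonzero (`MaxSpan ∅ = {0}`). -/
def MaxSpan {n : ℕ} (S : Set (Fin n → ℝ≥0)) : Set (Fin n → ℝ≥0) :=
  {u | ∃ (F : Finset (Fin n → ℝ≥0)) (lam : (Fin n → ℝ≥0) → ℝ≥0),
    ↑F ⊆ S ∧ u = F.sup (fun x => lam x • x)}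

/-- A max cone: a subset of `ℝ≥0ⁿ` closed under pointwise max `⊔` and under
multiplication by nonnegative scalars. -/
def MaxCone {n : ℕ} (K : Set (Fin n → ℝ≥0)) : Prop :=
  0 ∈ K ∧ (∀ x ∈ K, ∀ y ∈ K, x ⊔ y ∈ K) ∧ (∀ (c : ℝ≥0), ∀ x ∈ K, c • x ∈ K)

/-- `u` is an extremal in `K` if `u = v ⊔ w` with `v, w ∈ K` implies `u = v` or `u = w`. -/
def IsExtremal {n : ℕ} (K : Set (Fin n → ℝ≥0)) (u : Fin n → ℝ≥0) : Prop :=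
  u ∈ K ∧ ∀ v ∈ K, ∀ w ∈ K, u = v ⊔ w → u = v ∨ u = w

/-- A vector is scaled if its max norm `⨆ i, x i` equals `1`. -/
def Scaled {n : ℕ} (x : Fin n → ℝ≥0) : Prop := (⨆ i, x i) = 1

/-- The support of a vector. -/
def supp {n : ℕ} (v : Fin n → ℝ≥0) : Set (Fin n) := {j | 0 < v j}

/-- For `j ∈ supp u`, `rescale u j = (1 / u j) • u`, the `j`-scaling `u(j)`. -/
noncomputable def rescale {n : ℕ} (u : Fin n → ℝ≥0) (j : Fin n) : Fin n → ℝ≥0 :=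
  (u j)⁻¹ • u

/-- `T(j) = {u(j) : u ∈ T, j ∈ supp u}`. -/
noncomputable def setScale {n : ℕ} (T : Set (Fin n → ℝ≥0)) (j : Fin n) :
    Set (Fin n → ℝ≥0) :=
  {y | ∃ u ∈ T, j ∈ supp u ∧ y = rescale u j}

/-- `u` is minimal in `T` if `v ∈ T` and `v ≤ u` imply `v = u`. -/
def MinimalIn {n : ℕ} (T : Set (Fin n → ℝ≥0)) (u : Fin n → ℝ≥0) : Prop :=
  u ∈ T ∧ ∀ v ∈ T, v ≤ u → v = u

/-- A set is totally dependent if each of its elements is a max combination of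
the remaining ones. -/
def TotallyDependent {n : ℕ} (S : Set (Fin n → ℝ≥0)) : Prop :=
  ∀ x ∈ S, x ∈ MaxSpan (S \ {x})

/-- A set is independent if none of its elements is a max combination of
the remaining ones. -/
def IndependentSet {n : ℕ} (S : Set (Fin n → ℝ≥0)) : Prop :=
  ∀ x ∈ S, x ∉ MaxSpan (S \ {x})

/-- A basis for `K` is an independent set of generators for `K`. -/
def IsBasis {n : ℕ} (S K : Set (Fin n → ℝ≥0)) : Prop :=
  IndependentSet S ∧ MaxSpan S = K

section Aux


variable {n : ℕ}

private lemma continuous_finsup {X : Type*} [TopologicalSpace X] {ι : Type*} (F : Finset ι)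
    (f : ι → X → ℝ≥0) (hf : ∀ j, Continuous (f j)) :
    Continuous fun x => F.sup (fun j => f j x) := by
  classical
  induction F using Finset.cons_induction with
  | empty => simpa using continuous_const
  | cons a s ha ih => simpa [Finset.sup_cons] using (hf a).max ih

private lemma sup_smul_mem_maxSpan' {S : Set (Fin n → ℝ≥0)} (c : Fin n → ℝ≥0)
    (y : Fin n → (Fin n → ℝ≥0)) (hy : ∀ j, y j ∈ S) :
    Finset.univ.sup (fun j => c j • y j) ∈ MaxSpan S := by
  classical
  refine ⟨Finset.univ.image y,
    fun x => Finset.univ.sup (fun j => if y j = x then c j else 0), ?_, ?_⟩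
  · intro x hx
    simp only [Finset.coe_image, Set.mem_image] at hx
    obtain ⟨j, _, rfl⟩ := hx
    exact hy j
  · apply le_antisymm
    · apply Finset.sup_le; intro j _
      have h1 : c j ≤ Finset.univ.sup (fun k => if y k = y j then c k else 0) := by
        refine le_trans ?_ (Finset.le_sup (Finset.mem_univ j)); simp
      have h2 : c j • y j ≤ (Finset.univ.sup fun k => if y k = y j then c k else 0) • y j := by
        rw [Pi.le_def]; intro i
        exact mul_le_mul_left h1 _
      exact le_trans h2 (Finset.le_sup
        (f := fun x => (Finset.univ.sup fun k => if y k = x then c k else 0) • x)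
        (Finset.mem_image_of_mem y (Finset.mem_univ j)))
    · apply Finset.sup_le; intro x hx
      simp only [Finset.mem_image, Finset.mem_univ, true_and] at hx
      obtain ⟨j0, rfl⟩ := hx
      rw [Pi.le_def]; intro i
      rw [Pi.smul_apply, smul_eq_mul, NNReal.finset_sup_mul]
      apply Finset.sup_le; intro k _
      by_cases hk : y k = y j0
      · simp only [if_pos hk]
        have : c k * y j0 i = c k * y k i := by rw [hk]
        rw [this]
        have h3 : (c k • y k) i ≤ (Finset.univ.sup fun j => c j • y j) i := by
          rw [Finset.sup_apply]
          exact Finset.le_sup (f := fun j => (c j • y j) i) (Finset.mem_univ k)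
        simpa using h3
      · simp [hk]

private lemma maxSpan_rep {S : Set (Fin n → ℝ≥0)} (s0 : Fin n → ℝ≥0) (hs0 : s0 ∈ S)
    {u : Fin n → ℝ≥0} (hu : u ∈ MaxSpan S) :
    ∃ (c : Fin n → ℝ≥0) (y : Fin n → (Fin n → ℝ≥0)), (∀ j, y j ∈ S) ∧
      u = Finset.univ.sup (fun j => c j • y j) := by
  classical
  obtain ⟨F, lam, hF, rfl⟩ := hu
  rcases F.eq_empty_or_nonempty with rfl | hFne
  · refine ⟨0, fun _ => s0, fun _ => hs0, ?_⟩
    simp only [Finset.sup_empty, Pi.zero_apply, zero_smul]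
    exact (Finset.sup_bot Finset.univ).symm
  · choose x hxF hxsup using fun i : Fin n =>
      Finset.exists_mem_eq_sup F hFne (fun v => lam v * v i)
    refine ⟨fun i => lam (x i), fun i => x i, fun i => hF (hxF i), ?_⟩
    funext i
    rw [Finset.sup_apply, Finset.sup_apply]
    apply le_antisymm
    · apply Finset.sup_le; intro v hv
      have h1 : lam v * v i ≤ F.sup (fun v => lam v * v i) :=
        Finset.le_sup (f := fun v => lam v * v i) hv
      rw [hxsup i] at h1
      refine le_trans (by simpa using h1) ?_
      exact Finset.le_sup (f := fun j => (lam (x j) • x j) i) (Finset.mem_univ i)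
    · apply Finset.sup_le; intro j _
      have := Finset.le_sup (f := fun v => (lam v • v) i) (hxF j)
      simpa using this

end Aux

/-- if `S ⊆ ℝ≥0ⁿ` is compact and `0 ∉ S`, then `span(S)` is
closed. -/
theorem stmt14 {n : ℕ} (S : Set (Fin n → ℝ≥0)) (hc : IsCompact S)
    (h0 : (0 : Fin n → ℝ≥0) ∉ S) :
    IsClosed (MaxSpan S) := by
  classical
  rcases S.eq_empty_or_nonempty with rfl | ⟨s0, hs0⟩
  · have hMS : MaxSpan (∅ : Set (Fin n → ℝ≥0)) = {0} := by
      ext u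
      constructor
      · rintro ⟨F, lam, hF, rfl⟩
        have hF0 : F = ∅ := Finset.coe_eq_empty.mp (Set.subset_empty_iff.mp hF)
        subst hF0
        simp only [Finset.sup_empty, Set.mem_singleton_iff]
        rfl
      · rintro rfl
        exact ⟨∅, 0, by simp, by simp only [Finset.sup_empty]; rfl⟩
    rw [hMS]
    exact isClosed_singleton
  · set g : (Fin n → ℝ≥0) → ℝ≥0 := fun v => Finset.univ.sup v with hg
    have hgcont : Continuous g :=
      continuous_finsup Finset.univ (fun j (v : Fin n → ℝ≥0) => v j) (fun j => continuous_apply j)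
    have hgmono : Monotone g := fun a b h => Finset.sup_mono_fun (fun i _ => h i)
    have hgsmul : ∀ (c : ℝ≥0) (x : Fin n → ℝ≥0), g (c • x) = c * g x := by
      intro c x
      rw [hg]
      simp only []
      rw [NNReal.mul_finset_sup]
      exact Finset.sup_congr rfl (fun j _ => rfl)
    obtain ⟨x0, hx0S, hx0min⟩ := hc.exists_isMinOn ⟨s0, hs0⟩ hgcont.continuousOn
    have hεle : ∀ x ∈ S, g x0 ≤ g x := fun x hx => hx0min hx
    have hεpos : 0 < g x0 := by
      have hx0ne : x0 ≠ 0 := fun h => h0 (h ▸ hx0S)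
      obtain ⟨i, hi⟩ := Function.ne_iff.mp hx0ne
      have : x0 i ≤ g x0 := Finset.le_sup (Finset.mem_univ i)
      exact lt_of_lt_of_le (pos_iff_ne_zero.mpr (by simpa using hi)) this
    set ε := g x0 with hε
    have key : ∀ R : ℝ≥0, IsCompact (MaxSpan S ∩ {v | g v ≤ R}) := by
      intro R
      set Φ : ((Fin n → ℝ≥0) × (Fin n → (Fin n → ℝ≥0))) → (Fin n → ℝ≥0) :=
        fun p => Finset.univ.sup (fun j => p.1 j • p.2 j) with hΦdef
      have hΦ : Continuous Φ := by
        apply continuous_pi; intro i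
        have heq : (fun p : ((Fin n → ℝ≥0) × (Fin n → (Fin n → ℝ≥0))) => Φ p i)
            = fun p => Finset.univ.sup (fun j => p.1 j * p.2 j i) := by
          funext p
          rw [hΦdef]
          simp only []
          rw [Finset.sup_apply]
          rfl
        rw [heq]
        exact continuous_finsup Finset.univ _ (fun j =>
          (((continuous_apply j).comp continuous_fst).mul
            ((continuous_apply i).comp ((continuous_apply j).comp continuous_snd))))
      set C : Set ((Fin n → ℝ≥0) × (Fin n → (Fin n → ℝ≥0))) :=
        (Set.univ.pi fun _ : Fin n => Set.Iic (R / ε)) ×ˢ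
          (Set.univ.pi fun _ : Fin n => S) with hCdef
      have hCcomp : IsCompact C := by
        refine IsCompact.prod (isCompact_univ_pi fun _ => ?_) (isCompact_univ_pi fun _ => hc)
        rw [← Set.Icc_bot]; exact isCompact_Icc
      have himg : MaxSpan S ∩ {v | g v ≤ R} = (Φ '' C) ∩ {v | g v ≤ R} := by
        ext u
        simp only [Set.mem_inter_iff, Set.mem_setOf_eq, and_congr_left_iff]
        intro huR
        constructor
        · intro hu
          obtain ⟨c, y, hy, rfl⟩ := maxSpan_rep s0 hs0 hu
          refine ⟨(c, y), ⟨?_, ?_⟩, rfl⟩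
          · intro j _
            have h1 : c j • y j ≤ Finset.univ.sup (fun j => c j • y j) :=
              Finset.le_sup (f := fun j => c j • y j) (Finset.mem_univ j)
            have h2 : c j * g (y j) ≤ R := by
              rw [← hgsmul]
              exact le_trans (hgmono h1) huR
            have h3 : c j * ε ≤ R :=
              le_trans (mul_le_mul_right (hεle _ (hy j)) _) h2
            exact (le_div_iff₀ hεpos).mpr h3
          · intro j _
            exact hy j
        · rintro ⟨⟨c, y⟩, ⟨_, hy⟩, rfl⟩
          exact sup_smul_mem_maxSpan' c y (fun j => hy j (Set.mem_univ j))
      rw [himg]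
      exact (hCcomp.image hΦ).inter_right (isClosed_le hgcont continuous_const)
    apply isClosed_of_closure_subset
    intro u hu
    set R := g u + 1 with hR
    have hU : IsOpen {v | g v < R} := isOpen_lt hgcont continuous_const
    have huU : u ∈ {v | g v < R} := by
      show g u < R
      exact lt_add_of_pos_right _ one_pos
    have h1 : u ∈ closure ({v | g v < R} ∩ MaxSpan S) :=
      hU.inter_closure ⟨huU, hu⟩
    have h2 : closure ({v | g v < R} ∩ MaxSpan S) ⊆ MaxSpan S ∩ {v | g v ≤ R} := by
      apply closure_minimal
      · rintro v ⟨hv1, hv2⟩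
        have hv1' : g v < R := hv1
        exact ⟨hv2, le_of_lt hv1'⟩
      · exact (key R).isClosed
    exact (h2 h1).1
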